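/- Let v be a stem in a forest T, let R be the set of leaf neighbors of v, and let r = |R| ≥ 1. If r+1 is not a triangular number, then s̊(T) = s̊(T − R − v) + s̊(K_{1,r}). -/

import Mathlib

variable {V : Type} [Fintype V] [DecidableEq V]

/-- The `k`-th triangular number `t_k = C(k+1,2)`. -/
def tri (k : ℕ) : ℕ := (k + 1).choose 2

/-- A natural number is triangular if it equals `t_k` for some `k`. -/
def IsTriangular (m : ℕ) : Prop := ∃ k, m = tri k

/-- `uval r = max {k : t_k ≤ r}`. -/
def uval (r : ℕ) : ℕ := Nat.findGreatest (fun k => tri k ≤ r) r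

open Classical in
/-- Sum-color cost (optimal total score of the slow-coloring game) of the subgraph
of `G` induced by `S`: it is `0` when there are no vertices, and otherwise the maximum
over nonempty marked sets `M ⊆ S` of `|M|` plus the minimum over nonempty independent
subsets `I ⊆ M` of the sum-color cost of the graph with `I` deleted. -/
noncomputable def scost (G : SimpleGraph V) (S : Finset V) : ℕ :=
  if S = ∅ then 0
  else
    (S.powerset.erase ∅).attach.sup fun M =>
      M.1.card +
      WithBot.unbotD 0
        ((((M.1.powerset.erase ∅).filter
              fun I => ∀ x ∈ I, ∀ y ∈ I, ¬ G.Adj x y).attach.image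
            fun I => scost G (S \ I.1)).min)
termination_by S.card
decreasing_by
  · have hI := I.2
    have hM := M.2
    simp only [Finset.mem_filter, Finset.mem_erase, Finset.mem_powerset] at hI hM
    have hsub : I.1 ⊆ S := hI.1.2.trans hM.2
    have hne : I.1.Nonempty := Finset.nonempty_iff_ne_empty.mpr hI.1.1
    exact Finset.card_lt_card (Finset.sdiff_ssubset hsub hne)

/-- A vertex is a leaf if it has exactly one neighbor. -/
def IsLeaf (G : SimpleGraph V) (v : V) : Prop := (G.neighborSet v).ncard = 1

/-- A stem in a forest: a vertex with at least one leaf neighbor and at most one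
non-leaf neighbor. -/
def IsStem (G : SimpleGraph V) (v : V) : Prop :=
  (∃ w, G.Adj v w ∧ IsLeaf G w) ∧ {w | G.Adj v w ∧ ¬ IsLeaf G w}.ncard ≤ 1

/-- The star `K_{1,r}` with one center (the vertex `0`) and `r` leaves. -/
def starGraph (r : ℕ) : SimpleGraph (Fin (r + 1)) :=
  SimpleGraph.fromRel (fun x _ => x = 0)


/-- Independence predicate matching the one used in `scost`. -/
def Indep (G : SimpleGraph V) (I : Finset V) : Prop := ∀ x ∈ I, ∀ y ∈ I, ¬ G.Adj x y

lemma scost_empty (G : SimpleGraph V) : scost G ∅ = 0 := by rw [scost]; simp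

open Classical in
lemma scost_eq_of_ne (G : SimpleGraph V) (S : Finset V) (h : S ≠ ∅) :
    scost G S = (S.powerset.erase ∅).attach.sup fun M =>
      M.1.card +
      WithBot.unbotD 0
        ((((M.1.powerset.erase ∅).filter
              fun I => ∀ x ∈ I, ∀ y ∈ I, ¬ G.Adj x y).attach.image
            fun I => scost G (S \ I.1)).min) := by
  rw [scost, if_neg h]

open Classical in
/-- For any nonempty mark `N ⊆ S`, Painter has a response `I` witnessing the
recursion lower bound. -/
lemma scost_resp (G : SimpleGraph V) {S N : Finset V} (hNS : N ⊆ S) (hN : N ≠ ∅) :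
    ∃ I, I ⊆ N ∧ I ≠ ∅ ∧ Indep G I ∧ N.card + scost G (S \ I) ≤ scost G S := by
  classical
  have hS : S ≠ ∅ := fun h => hN (Finset.subset_empty.mp (h ▸ hNS))
  rw [scost_eq_of_ne G S hS]
  have hNmem : N ∈ S.powerset.erase ∅ := by
    simp [Finset.mem_erase, Finset.mem_powerset, hNS, hN]
  -- the inner filtered set is nonempty: a singleton of any element of N
  obtain ⟨x, hx⟩ := Finset.nonempty_iff_ne_empty.mpr hN
  have hxmem : ({x} : Finset V) ∈ (N.powerset.erase ∅).filter
      fun I => ∀ a ∈ I, ∀ b ∈ I, ¬ G.Adj a b := by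
    simp only [Finset.mem_filter, Finset.mem_erase, Finset.mem_powerset]
    refine ⟨⟨by simp, by simpa using hx⟩, ?_⟩
    intro a ha b hb
    simp only [Finset.mem_singleton] at ha hb
    subst ha; subst hb; exact G.irrefl
  set Fs := ((N.powerset.erase ∅).filter fun I => ∀ a ∈ I, ∀ b ∈ I, ¬ G.Adj a b) with hFs
  have hFne : (Fs.attach.image fun I => scost G (S \ I.1)).Nonempty := by
    refine ⟨scost G (S \ {x}), ?_⟩
    exact Finset.mem_image.mpr ⟨⟨{x}, hxmem⟩, Finset.mem_attach _ _, rfl⟩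
  obtain ⟨b, hbmem, hbmin⟩ := Finset.exists_min_image _ id hFne
  obtain ⟨I, hIat, hIval⟩ := Finset.mem_image.mp hbmem
  have hI2 := I.2
  simp only [hFs, Finset.mem_filter, Finset.mem_erase, Finset.mem_powerset] at hI2
  refine ⟨I.1, hI2.1.2, hI2.1.1, hI2.2, ?_⟩
  have hle : (Fs.attach.image fun I => scost G (S \ I.1)).min = (b : WithBot ℕ) := by
    apply le_antisymm
    · exact Finset.min_le hbmem
    · exact Finset.le_min fun y hy => WithTop.coe_le_coe.mpr (hbmin y hy)
  calc N.card + scost G (S \ I.1) = N.card + b := by rw [hIval]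
    _ = N.card + WithBot.unbotD 0 ((Fs.attach.image fun I => scost G (S \ I.1)).min) := by
        rw [hle]; rfl
    _ ≤ _ := Finset.le_sup (f := fun M =>
        M.1.card + WithBot.unbotD 0 ((((M.1.powerset.erase ∅).filter
          fun I => ∀ a ∈ I, ∀ b ∈ I, ¬ G.Adj a b).attach.image
            fun I => scost G (S \ I.1)).min)) (Finset.mem_attach _ ⟨N, hNmem⟩)

/-- Lister lower-bound principle. -/
lemma le_scost (G : SimpleGraph V) {S N : Finset V} (hNS : N ⊆ S) (hN : N ≠ ∅) {c : ℕ}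
    (h : ∀ I, I ⊆ N → I ≠ ∅ → Indep G I → c ≤ N.card + scost G (S \ I)) :
    c ≤ scost G S := by
  obtain ⟨I, h1, h2, h3, h4⟩ := scost_resp G hNS hN
  exact le_trans (h I h1 h2 h3) h4

open Classical in
/-- Painter upper-bound principle. -/
lemma scost_le (G : SimpleGraph V) {S : Finset V} {c : ℕ}
    (h : ∀ M, M ⊆ S → M ≠ ∅ →
      ∃ I, I ⊆ M ∧ I ≠ ∅ ∧ Indep G I ∧ M.card + scost G (S \ I) ≤ c) :
    scost G S ≤ c := by
  classical
  by_cases hS : S = ∅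
  · rw [hS, scost_empty]; exact Nat.zero_le c
  rw [scost_eq_of_ne G S hS]
  apply Finset.sup_le
  intro M _
  have hM2 := M.2
  simp only [Finset.mem_erase, Finset.mem_powerset] at hM2
  obtain ⟨I, hIM, hIne, hIind, hIle⟩ := h M.1 hM2.2 hM2.1
  have hImem : I ∈ (M.1.powerset.erase ∅).filter
      fun I => ∀ a ∈ I, ∀ b ∈ I, ¬ G.Adj a b := by
    simp only [Finset.mem_filter, Finset.mem_erase, Finset.mem_powerset]
    exact ⟨⟨hIne, hIM⟩, hIind⟩
  have hmin : ((((M.1.powerset.erase ∅).filter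
        fun I => ∀ a ∈ I, ∀ b ∈ I, ¬ G.Adj a b).attach.image
          fun I => scost G (S \ I.1)).min) ≤ (scost G (S \ I) : WithBot ℕ) :=
    Finset.min_le (Finset.mem_image.mpr ⟨⟨I, hImem⟩, Finset.mem_attach _ _, rfl⟩)
  have : WithBot.unbotD 0 ((((M.1.powerset.erase ∅).filter
        fun I => ∀ a ∈ I, ∀ b ∈ I, ¬ G.Adj a b).attach.image
          fun I => scost G (S \ I.1)).min) ≤ scost G (S \ I) := by
    cases hm : ((((M.1.powerset.erase ∅).filter
        fun I => ∀ a ∈ I, ∀ b ∈ I, ¬ G.Adj a b).attach.image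
          fun I => scost G (S \ I.1)).min) with
    | top => rw [hm] at hmin; exact absurd (top_le_iff.mp hmin) WithTop.coe_ne_top
    | coe a =>
        rw [hm] at hmin
        have : a ≤ scost G (S \ I) := WithTop.coe_le_coe.mp hmin
        exact this
  exact le_trans (Nat.add_le_add_left this _) hIle

/-! ### Arithmetic about triangular numbers -/

noncomputable def eps (l : ℕ) : ℕ := by
  classical exact if IsTriangular (l + 1) then 1 else 0

/-- `uu l` is the largest `k` with `C(k,2) ≤ l`. -/
def uu (l : ℕ) : ℕ := uval l + 1

lemma tri_succ (k : ℕ) : tri (k + 1) = tri k + (k + 1) := by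
  show (k + 1 + 1).choose 2 = (k+1).choose 2 + (k+1)
  rw [Nat.choose_succ_succ (k+1) 1, Nat.choose_one_right]
  simp [Nat.succ_eq_add_one]
  omega

lemma tri_mono : Monotone tri := by
  intro a b hab
  induction b with
  | zero => simp_all
  | succ n ih =>
    rcases Nat.lt_or_ge a (n+1) with h | h
    · exact le_trans (ih (by omega)) (by rw [tri_succ]; omega)
    · have : a = n + 1 := by omega
      simp [this]

lemma tri_lt_tri {a b : ℕ} (h : a < b) : tri a < tri b := by
  have : tri (a+1) ≤ tri b := tri_mono h
  rw [tri_succ] at this; omega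

lemma tri_spec (l : ℕ) : tri (uval l) ≤ l := by
  have h0 : tri 0 ≤ l := by simp [tri]
  unfold uval
  exact Nat.findGreatest_spec (P := fun k => tri k ≤ l) (Nat.zero_le l) h0

lemma tri_spec' (l : ℕ) : l < tri (uval l + 1) := by
  by_cases h : uval l + 1 ≤ l
  · by_contra hc
    push_neg at hc
    have : ¬ tri (uval l + 1) ≤ l := by
      unfold uval
      exact Nat.findGreatest_is_greatest (P := fun k => tri k ≤ l) (Nat.lt_succ_self _) h
    omega
  · have hl : l ≤ uval l := by omega
    have : l < tri (l + 1) := by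
      calc l < l + 1 := Nat.lt_succ_self l
        _ ≤ tri (l+1) := by
          clear hl h
          induction l with
          | zero => simp [tri]
          | succ n ih => rw [tri_succ]; omega
    calc l < tri (l+1) := this
      _ ≤ tri (uval l + 1) := tri_mono (by omega)

lemma uval_mono {a b : ℕ} (h : a ≤ b) : uval a ≤ uval b := by
  by_contra hc
  push_neg at hc
  have h1 : tri (uval a) ≤ a := tri_spec a
  have h2 : b < tri (uval b + 1) := tri_spec' b
  have h3 : tri (uval b + 1) ≤ tri (uval a) := tri_mono (by omega)
  omega

lemma uu_mono {a b : ℕ} (h : a ≤ b) : uu a ≤ uu b := by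
  simp only [uu]; exact Nat.add_le_add_right (uval_mono h) 1

lemma one_le_uu (l : ℕ) : 1 ≤ uu l := by simp [uu]

lemma eps_le_one (l : ℕ) : eps l ≤ 1 := by
  unfold eps; split <;> omega

/-- `eps l = 1` exactly when `l` is at the top of its `uval`-block. -/
lemma eps_eq_one_iff (l : ℕ) : eps l = 1 ↔ l = tri (uval l) + uval l := by
  unfold eps
  split
  · rename_i h
    obtain ⟨k, hk⟩ := h
    have h1 : tri (uval l) ≤ l := tri_spec l
    have h2 : l < tri (uval l + 1) := tri_spec' l
    have hk1 : uval l < k := by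
      by_contra hc
      push_neg at hc
      have := tri_mono hc
      omega
    have hk2 : k ≤ uval l + 1 := by
      by_contra hc
      push_neg at hc
      have := tri_lt_tri (show uval l + 1 < k by omega)
      omega
    have : k = uval l + 1 := by omega
    subst this
    rw [tri_succ] at hk
    constructor <;> (intro; omega)
  · rename_i h
    constructor
    · intro; omega
    · intro hl
      exfalso
      exact h ⟨uval l + 1, by rw [tri_succ]; omega⟩

lemma eps_zero_of_not (l : ℕ) (h : ¬ IsTriangular (l+1)) : eps l = 0 := by
  unfold eps; split
  · exact absurd ‹_› h
  · rfl

/-- Block bound: if `uval` doesn't drop, `m` is at most `uval l`. -/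
lemma block_bound {l m : ℕ} (hm : m ≤ l) (h : uval (l - m) = uval l) : m ≤ uval l := by
  have h1 : tri (uval l) ≤ l - m := h ▸ tri_spec (l - m)
  have h2 : l < tri (uval l + 1) := tri_spec' l
  rw [tri_succ] at h2
  omega

/-- uu + eps is monotone. -/
lemma uu_eps_mono {a b : ℕ} (h : a ≤ b) : uu a + eps a ≤ uu b + eps b := by
  rcases Nat.eq_or_lt_of_le h with rfl | hlt
  · rfl
  by_cases he : eps a = 1
  · -- a is at the top of its block, so uval b > uval a
    rw [eps_eq_one_iff] at he
    have : uval a < uval b := by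
      by_contra hc
      push_neg at hc
      have h1 : uval b ≤ uval a := hc
      have h2 : tri (uval b) ≤ b := tri_spec b
      have h3 : b < tri (uval b + 1) := tri_spec' b
      have h4 : uval a ≤ uval b := uval_mono h
      have h5 : uval a = uval b := le_antisymm h4 h1
      rw [← h5, tri_succ] at h3
      omega
    have := eps_le_one b
    have := eps_le_one a
    simp only [uu]
    omega
  · have : eps a = 0 := by have := eps_le_one a; omega
    have := uu_mono h
    have := eps_le_one b
    omega

/-- Dichotomy AR3 (no live non-leaf neighbor). -/
lemma AR3 {l m : ℕ} (hm : m ≤ l) (h : ¬ (uu (l - m) + 1 ≤ uu l)) : m + 1 ≤ uu l := by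
  have h1 : uu (l-m) ≤ uu l := uu_mono (by omega)
  have h2 : uval (l-m) = uval l := by simp only [uu] at h1 h ⊢; omega
  have := block_bound hm h2
  simp only [uu]; omega

/-- Dichotomy AR1 (live non-leaf neighbor which is marked and gets colored). -/
lemma AR1 {l m : ℕ} (hm : m ≤ l) (h : ¬ (uu (l - m) + 1 ≤ uu l + eps l)) :
    m + 2 ≤ uu l + eps l := by
  have h1 : uu (l-m) ≤ uu l := uu_mono (by omega)
  have h2 : uval (l-m) = uval l := by simp only [uu] at h1 h ⊢; have := eps_le_one l; omega
  have he : eps l = 0 := by simp only [uu] at h; have := eps_le_one l; omega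
  have h3 : tri (uval l) ≤ l - m := h2 ▸ tri_spec (l - m)
  have h4 : l < tri (uval l + 1) := tri_spec' l
  rw [tri_succ] at h4
  have h5 : l ≠ tri (uval l) + uval l := by
    intro hc
    have := (eps_eq_one_iff l).mpr hc
    omega
  simp only [uu]
  omega

/-- Dichotomy AR2 (live unmarked non-leaf neighbor). -/
lemma AR2 {l m : ℕ} (hm : m ≤ l) (h : ¬ (uu (l - m) + eps (l - m) + 1 ≤ uu l + eps l)) :
    m + 1 ≤ uu l + eps l := by
  have h1 : uu (l-m) + eps (l-m) ≤ uu l + eps l := uu_eps_mono (by omega)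
  have heq : uu (l-m) + eps (l-m) = uu l + eps l := by omega
  by_cases h2 : uval (l - m) = uval l
  · have := block_bound hm h2
    simp only [uu]; omega
  · -- then uval (l-m) = uval l - 1, eps (l-m) = 1, eps l = 0
    have h3 : uval (l-m) ≤ uval l := uval_mono (by omega)
    have he1 : eps (l-m) ≤ 1 := eps_le_one (l-m)
    have he2 : eps l ≤ 1 := eps_le_one l
    have h4 : uval (l-m) + 1 = uval l ∧ eps (l-m) = 1 ∧ eps l = 0 := by
      simp only [uu] at heq; omega
    obtain ⟨h5, h6, h7⟩ := h4
    rw [eps_eq_one_iff] at h6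
    -- l - m = tri (uval (l-m)) + uval (l-m) = tri (uval l) - 1
    have h8 : tri (uval l) = tri (uval (l-m)) + (uval (l-m) + 1) := by
      rw [← h5, tri_succ]
    have h9 : l < tri (uval l + 1) := tri_spec' l
    rw [tri_succ] at h9
    have h10 : l ≠ tri (uval l) + uval l := by
      intro hc
      have := (eps_eq_one_iff l).mpr hc
      omega
    simp only [uu]
    omega

/-! ### General game lemmas -/

open Classical in
/-- Lister has an optimal first mark. -/
lemma scost_attained (G : SimpleGraph V) {S : Finset V} (hS : S ≠ ∅) :
    ∃ M, M ⊆ S ∧ M ≠ ∅ ∧ ∀ I, I ⊆ M → I ≠ ∅ → Indep G I →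
      scost G S ≤ M.card + scost G (S \ I) := by
  classical
  rw [scost_eq_of_ne G S hS]
  have hne : ((S.powerset.erase ∅).attach).Nonempty := by
    rw [Finset.attach_nonempty_iff]
    exact ⟨S, by simp [Finset.mem_erase, Finset.mem_powerset, hS]⟩
  obtain ⟨M₀, _, hsup⟩ := Finset.exists_mem_eq_sup _ hne
    (fun M => M.1.card + WithBot.unbotD 0 ((((M.1.powerset.erase ∅).filter
        fun I => ∀ a ∈ I, ∀ b ∈ I, ¬ G.Adj a b).attach.image
          fun I => scost G (S \ I.1)).min))
  have hM₀ := M₀.2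
  simp only [Finset.mem_erase, Finset.mem_powerset] at hM₀
  refine ⟨M₀.1, hM₀.2, hM₀.1, ?_⟩
  intro I hIM hIne hIind
  rw [hsup]
  apply Nat.add_le_add_left
  have hImem : I ∈ (M₀.1.powerset.erase ∅).filter
      fun I => ∀ a ∈ I, ∀ b ∈ I, ¬ G.Adj a b := by
    simp only [Finset.mem_filter, Finset.mem_erase, Finset.mem_powerset]
    exact ⟨⟨hIne, hIM⟩, hIind⟩
  have hmin : ((((M₀.1.powerset.erase ∅).filter
        fun I => ∀ a ∈ I, ∀ b ∈ I, ¬ G.Adj a b).attach.image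
          fun I => scost G (S \ I.1)).min) ≤ (scost G (S \ I) : WithTop ℕ) :=
    Finset.min_le (Finset.mem_image.mpr ⟨⟨I, hImem⟩, Finset.mem_attach _ _, rfl⟩)
  cases hm : ((((M₀.1.powerset.erase ∅).filter
        fun I => ∀ a ∈ I, ∀ b ∈ I, ¬ G.Adj a b).attach.image
          fun I => scost G (S \ I.1)).min) with
  | top => rw [hm] at hmin; exact absurd (top_le_iff.mp hmin) WithTop.coe_ne_top
  | coe a =>
      rw [hm] at hmin
      have : a ≤ scost G (S \ I) := WithTop.coe_le_coe.mp hmin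
      exact this

/-- Superadditivity over disjoint vertex sets. -/
lemma scost_superadd (G : SimpleGraph V) :
    ∀ n (A B : Finset V), A.card ≤ n → Disjoint A B →
      scost G A + scost G B ≤ scost G (A ∪ B) := by
  intro n
  induction n with
  | zero =>
    intro A B hA _
    have : A = ∅ := Finset.card_eq_zero.mp (by omega)
    subst this
    simp [scost_empty]
  | succ n ih =>
    intro A B hA hd
    by_cases hAe : A = ∅
    · subst hAe; simp [scost_empty]
    obtain ⟨M₀, hM₀S, hM₀ne, hopt⟩ := scost_attained G hAe
    have hMsub : M₀ ⊆ A ∪ B := hM₀S.trans Finset.subset_union_left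
    apply le_scost G hMsub hM₀ne
    intro I hIM hIne hIind
    have hIA : I ⊆ A := hIM.trans hM₀S
    have h1 : (A ∪ B) \ I = (A \ I) ∪ B := by
      ext x
      simp only [Finset.mem_sdiff, Finset.mem_union]
      constructor
      · rintro ⟨h | h, hni⟩
        · exact Or.inl ⟨h, hni⟩
        · exact Or.inr h
      · rintro (⟨h, hni⟩ | h)
        · exact ⟨Or.inl h, hni⟩
        · refine ⟨Or.inr h, fun hc => ?_⟩
          exact (Finset.disjoint_left.mp hd (hIA hc)) h
    rw [h1]
    have h2 : (A \ I).card ≤ n := by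
      have : (A \ I).card < A.card := by
        apply Finset.card_lt_card
        apply Finset.sdiff_ssubset hIA (Finset.nonempty_iff_ne_empty.mpr hIne)
      omega
    have h3 := ih (A \ I) B h2 (Finset.disjoint_of_subset_left (Finset.sdiff_subset) hd)
    have h4 := hopt I hIM hIne hIind
    omega

/-- Lower bound for an independent position. -/
lemma indep_lower (G : SimpleGraph V) {S : Finset V}
    (h : ∀ x ∈ S, ∀ y ∈ S, ¬ G.Adj x y) : S.card ≤ scost G S := by
  by_cases hS : S = ∅
  · subst hS; simp
  apply le_scost G (Finset.Subset.refl S) hS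
  intro I _ _ _
  exact Nat.le_add_right _ _

/-- Lower bound for the star: position with live center `c` and `l` live leaves
is worth at least `l + uu l`. -/
lemma star_lower (G : SimpleGraph V) :
    ∀ n (S : Finset V) (c : V), S.card ≤ n → c ∈ S →
    (∀ x ∈ S, x ≠ c → G.Adj c x) →
    (∀ x ∈ S, x ≠ c → ∀ y ∈ S, y ≠ c → ¬ G.Adj x y) →
    (S.card - 1) + uu (S.card - 1) ≤ scost G S := by
  intro n
  induction n with
  | zero => intro S c hS hc _ _; exact absurd (Finset.card_pos.mpr ⟨c, hc⟩) (by omega)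
  | succ n ih =>
    intro S c hS hc hadj hind
    set l := S.card - 1 with hl
    set k := uu l with hk
    -- Lister marks {c} ∪ X with |X| = k - 1
    have hkl : k - 1 ≤ l := by
      have : uval l ≤ l := Nat.findGreatest_le l
      simp only [hk, uu]
      omega
    have hcard : k - 1 ≤ (S.erase c).card := by
      rw [Finset.card_erase_of_mem hc]; omega
    obtain ⟨X, hXsub, hXcard⟩ := Finset.exists_subset_card_eq hcard
    have hcX : c ∉ X := fun h => (Finset.mem_erase.mp (hXsub h)).1 rfl
    have hNsub : insert c X ⊆ S := by
      intro x hx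
      rcases Finset.mem_insert.mp hx with rfl | hx
      · exact hc
      · exact (Finset.erase_subset c S) (hXsub hx)
    have hNcard : (insert c X).card = k := by
      rw [Finset.card_insert_of_notMem hcX, hXcard]
      have := one_le_uu l
      omega
    apply le_scost G hNsub (by
      intro h
      have : c ∈ (∅ : Finset V) := h ▸ Finset.mem_insert_self c X
      simp at this)
    intro I hIN hIne hIind
    rw [hNcard]
    by_cases hcI : c ∈ I
    · -- I = {c}; the rest is independent
      have hI : I = {c} := by
        apply Finset.eq_singleton_iff_unique_mem.mpr
        refine ⟨hcI, fun x hx => ?_⟩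
        by_contra hxc
        have hxX : x ∈ X := by
          rcases Finset.mem_insert.mp (hIN hx) with rfl | h
          · exact absurd rfl hxc
          · exact h
        have : x ≠ c := hxc
        exact (hIind c hcI x hx) (hadj x (hNsub (hIN hx)) this)
      subst hI
      have hSc : S \ {c} = S.erase c := by
        ext x; simp [Finset.mem_sdiff, Finset.mem_erase, and_comm]
      rw [hSc]
      have hlow : (S.erase c).card ≤ scost G (S.erase c) := by
        apply indep_lower
        intro x hx y hy
        exact hind x ((Finset.erase_subset c S) hx) (Finset.mem_erase.mp hx).1
          y ((Finset.erase_subset c S) hy) (Finset.mem_erase.mp hy).1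
      rw [Finset.card_erase_of_mem hc] at hlow
      omega
    · -- I ⊆ X, center survives
      have hIX : I ⊆ X := fun x hx => by
        rcases Finset.mem_insert.mp (hIN hx) with rfl | h
        · exact absurd hx hcI
        · exact h
      have hIS : I ⊆ S := fun x hx => hNsub (hIN hx)
      have hcS' : c ∈ S \ I := Finset.mem_sdiff.mpr ⟨hc, hcI⟩
      have hcard' : (S \ I).card = S.card - I.card := Finset.card_sdiff_of_subset hIS
      have hIcard : 1 ≤ I.card := Finset.card_pos.mpr (Finset.nonempty_iff_ne_empty.mpr hIne)
      have hIk : I.card ≤ k - 1 := hXcard ▸ Finset.card_le_card hIX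
      have hrec := ih (S \ I) c (by
          have : (S \ I).card < S.card := Finset.card_lt_card
            (Finset.sdiff_ssubset hIS (Finset.nonempty_iff_ne_empty.mpr hIne))
          omega) hcS'
        (fun x hx hxc => hadj x (Finset.mem_sdiff.mp hx).1 hxc)
        (fun x hx hxc y hy hyc =>
          hind x (Finset.mem_sdiff.mp hx).1 hxc y (Finset.mem_sdiff.mp hy).1 hyc)
      -- (S \ I).card - 1 = l - I.card
      have hc1 : (S \ I).card - 1 = l - I.card := by omega
      rw [hc1] at hrec
      -- key arithmetic: k - 1 ≤ uu (l - I.card)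
      have harith : k - 1 ≤ uu (l - I.card) := by
        have h1 : tri (uval l) ≤ l := tri_spec l
        have h2 : uval l ≤ 1 → k - 1 ≤ uu (l - I.card) := by
          intro h; have := one_le_uu (l - I.card); simp only [hk, uu] at *; omega
        rcases le_or_gt (uval l) 1 with h | h
        · exact h2 h
        · -- tri (uval l - 1) + (uval l - 1) ... show uval (l - I.card) ≥ uval l - 1
          have h3 : tri (uval l - 1) + (uval l) = tri (uval l) := by
            have := tri_succ (uval l - 1)
            rw [Nat.sub_add_cancel (by omega)] at this
            omega
          have h4 : tri (uval l - 1) ≤ l - I.card := by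
            simp only [hk, uu] at hIk
            omega
          have h5 : uval l - 1 ≤ uval (l - I.card) := by
            by_contra hcon
            push_neg at hcon
            have h6 : l - I.card < tri (uval (l - I.card) + 1) := tri_spec' (l - I.card)
            have h7 : tri (uval (l-I.card) + 1) ≤ tri (uval l - 1) := tri_mono (by omega)
            omega
          simp only [hk, uu]
          omega
      simp only [hk] at harith hIk ⊢
      omega

/-! ### The main Painter invariant -/

open Classical

open Classical in
/-- Potential of a position `S`. -/
noncomputable def gfun (G : SimpleGraph V) (v : V) (R : Finset V) (S : Finset V) : ℕ :=
  (S ∩ R).card + (if v ∈ S then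
      uu ((S ∩ R).card) + (if ∃ x ∈ S, G.Adj v x ∧ x ∉ R then eps ((S ∩ R).card) else 0)
    else 0)

lemma ex_resp (G : SimpleGraph V) {A N : Finset V} (hNA : N ⊆ A) :
    ∃ I', I' ⊆ N ∧ Indep G I' ∧ N.card + scost G (A \ I') ≤ scost G A ∧
      (N ≠ ∅ → I' ≠ ∅) := by
  by_cases h : N = ∅
  · refine ⟨∅, Finset.empty_subset _, ?_, ?_, fun hc => absurd h hc⟩
    · intro x hx; simp at hx
    · subst h; simp
  · obtain ⟨I, h1, h2, h3, h4⟩ := scost_resp G hNA h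
    exact ⟨I, h1, h3, h4, fun _ => h2⟩

lemma gfun_of_mem (G : SimpleGraph V) (v : V) (R S : Finset V) (h : v ∈ S) :
    gfun G v R S = (S ∩ R).card + uu ((S ∩ R).card) +
      (if ∃ x ∈ S, G.Adj v x ∧ x ∉ R then eps ((S ∩ R).card) else 0) := by
  rw [gfun, if_pos h]; omega

lemma gfun_of_not_mem (G : SimpleGraph V) (v : V) (R S : Finset V) (h : v ∉ S) :
    gfun G v R S = (S ∩ R).card := by
  rw [gfun, if_neg h]; omega

lemma main_upper (G : SimpleGraph V) (v : V) (R : Finset V)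
    (hleaf : ∀ w ∈ R, ∀ x, G.Adj w x ↔ x = v)
    (hone : ∀ x y, G.Adj v x → x ∉ R → G.Adj v y → y ∉ R → x = y) :
    ∀ (n : ℕ) (S : Finset V), S.card ≤ n →
      scost G S ≤ scost G (S \ insert v R) + gfun G v R S := by
  have hvR : v ∉ R := by
    intro h
    exact G.irrefl ((hleaf v h v).mpr rfl)
  intro n
  induction n with
  | zero =>
    intro S hS
    have : S = ∅ := Finset.card_eq_zero.mp (by omega)
    subst this
    simp [scost_empty]
  | succ n ih =>
    intro S hScard
    set W : Finset V := insert v R with hW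
    set A : Finset V := S \ W with hA
    set l : ℕ := (S ∩ R).card with hl
    apply scost_le
    intro M hMS hMne
    set K : Finset V := M ∩ R with hK
    set M' : Finset V := M \ W with hM'
    set m : ℕ := K.card with hm
    have hKR : K ⊆ R := Finset.inter_subset_right
    have hKM : K ⊆ M := Finset.inter_subset_left
    have hKSR : K ⊆ S ∩ R := by
      intro x hx
      exact Finset.mem_inter.mpr ⟨hMS (Finset.mem_inter.mp hx).1, (Finset.mem_inter.mp hx).2⟩
    have hmle : m ≤ l := Finset.card_le_card hKSR
    have hM'A : M' ⊆ A := by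
      intro x hx
      rw [Finset.mem_sdiff] at hx ⊢
      exact ⟨hMS hx.1, hx.2⟩
    have hM'M : M' ⊆ M := Finset.sdiff_subset
    have hANW : ∀ x ∈ A, x ∉ W := fun x hx => (Finset.mem_sdiff.mp hx).2
    have hvW : v ∈ W := Finset.mem_insert_self v R
    have hRW : R ⊆ W := Finset.subset_insert v R
    have hindep : ∀ I' : Finset V, I' ⊆ A → Indep G I' → Indep G (K ∪ I') := by
      intro I' hI'A hI' x hx y hy hadj
      rcases Finset.mem_union.mp hx with hxK | hxI <;>
        rcases Finset.mem_union.mp hy with hyK | hyI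
      · have := (hleaf x (hKR hxK) y).mp hadj
        subst this
        exact hvR (hKR hyK)
      · have := (hleaf x (hKR hxK) y).mp hadj
        subst this
        exact hANW y (hI'A hyI) hvW
      · have := (hleaf y (hKR hyK) x).mp hadj.symm
        subst this
        exact hANW x (hI'A hxI) hvW
      · exact hI' x hxI y hyI hadj
    have hsdiffW : ∀ P Q : Finset V, P ⊆ W → Q ⊆ A → (S \ (P ∪ Q)) \ W = A \ Q := by
      intro P Q hPW hQA
      ext x
      simp only [hA, Finset.mem_sdiff, Finset.mem_union]
      constructor
      · rintro ⟨⟨hxS, hxPQ⟩, hxW⟩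
        exact ⟨⟨hxS, hxW⟩, fun h => hxPQ (Or.inr h)⟩
      · rintro ⟨⟨hxS, hxW⟩, hxQ⟩
        refine ⟨⟨hxS, fun h => ?_⟩, hxW⟩
        rcases h with h | h
        · exact hxW (hPW h)
        · exact hxQ h
    have hinterR : ∀ P Q : Finset V, Q ⊆ A → (S \ (P ∪ Q)) ∩ R = (S ∩ R) \ P := by
      intro P Q hQA
      ext x
      simp only [Finset.mem_inter, Finset.mem_sdiff, Finset.mem_union]
      constructor
      · rintro ⟨⟨hxS, hxPQ⟩, hxR⟩
        exact ⟨⟨hxS, hxR⟩, fun h => hxPQ (Or.inl h)⟩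
      · rintro ⟨⟨hxS, hxR⟩, hxP⟩
        refine ⟨⟨hxS, fun h => ?_⟩, hxR⟩
        rcases h with h | h
        · exact hxP h
        · exact (hANW x (hQA h)) (hRW hxR)
    have hKcardS : ∀ Q : Finset V, Q ⊆ A → ((S \ (K ∪ Q)) ∩ R).card = l - m := by
      intro Q hQA
      rw [hinterR K Q hQA, Finset.card_sdiff_of_subset hKSR]
    have hvSR : v ∉ S ∩ R := fun h => hvR (Finset.mem_inter.mp h).2
    have hvcardS : ∀ Q : Finset V, Q ⊆ A → ((S \ ({v} ∪ Q)) ∩ R).card = l := by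
      intro Q hQA
      rw [hinterR {v} Q hQA]
      congr 1
      ext x
      simp only [Finset.mem_sdiff, Finset.mem_singleton]
      constructor
      · rintro ⟨h, _⟩; exact h
      · rintro h
        exact ⟨h, fun hc => hvSR (hc ▸ h)⟩
    have hIH : ∀ I : Finset V, I ⊆ M → I ≠ ∅ →
        scost G (S \ I) ≤ scost G ((S \ I) \ W) + gfun G v R (S \ I) := by
      intro I hIM hIne
      apply ih
      have hIS : I ⊆ S := hIM.trans hMS
      have : (S \ I).card < S.card := Finset.card_lt_card
        (Finset.sdiff_ssubset hIS (Finset.nonempty_iff_ne_empty.mpr hIne))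
      omega
    have hfinish : ∀ (P Q : Finset V) (c' : ℕ), P ⊆ W → Q ⊆ A → (P ∪ Q) ⊆ M →
        P ∪ Q ≠ ∅ → Indep G (P ∪ Q) →
        c' + scost G (A \ Q) ≤ scost G A →
        M.card + gfun G v R (S \ (P ∪ Q)) ≤ c' + gfun G v R S →
        ∃ I, I ⊆ M ∧ I ≠ ∅ ∧ Indep G I ∧
          M.card + scost G (S \ I) ≤ scost G A + gfun G v R S := by
      intro P Q c' hPW hQA hsubM hne hind hresp harith
      refine ⟨P ∪ Q, hsubM, hne, hind, ?_⟩
      have h1 := hIH (P ∪ Q) hsubM hne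
      rw [hsdiffW P Q hPW hQA] at h1
      omega
    have hucond_mono : ∀ I : Finset V,
        (∃ x ∈ S \ I, G.Adj v x ∧ x ∉ R) → (∃ x ∈ S, G.Adj v x ∧ x ∉ R) := by
      rintro I ⟨x, hx, h1, h2⟩
      exact ⟨x, (Finset.mem_sdiff.mp hx).1, h1, h2⟩
    obtain ⟨I', hI'M', hI'ind, hI'resp, hI'ne⟩ := ex_resp G hM'A
    have hI'A : I' ⊆ A := hI'M'.trans hM'A
    have hI'M : I' ⊆ M := hI'M'.trans hM'M
    have hKI'M : K ∪ I' ⊆ M := Finset.union_subset hKM hI'M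
    have hvI' : v ∉ I' := fun h => hANW v (hI'A h) hvW
    by_cases hvM : v ∈ M
    -- ==================== CASE: v marked ====================
    · have hvS : v ∈ S := hMS hvM
      have hgS : gfun G v R S = l + uu l +
          (if ∃ x ∈ S, G.Adj v x ∧ x ∉ R then eps l else 0) := gfun_of_mem G v R S hvS
      have hMdec : M = insert v (K ∪ M') := by
        ext x
        simp only [Finset.mem_insert, Finset.mem_union, hK, hM', hW,
          Finset.mem_inter, Finset.mem_sdiff]
        constructor
        · intro hx
          by_cases hxv : x = v
          · exact Or.inl hxv
          · by_cases hxR : x ∈ R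
            · exact Or.inr (Or.inl ⟨hx, hxR⟩)
            · refine Or.inr (Or.inr ⟨hx, fun hc => ?_⟩)
              rcases hc with h | h
              · exact hxv h
              · exact hxR h
        · rintro (rfl | ⟨hx, _⟩ | ⟨hx, _⟩) <;> first | exact hvM | exact hx
      have hvKM' : v ∉ K ∪ M' := by
        intro h
        rcases Finset.mem_union.mp h with h | h
        · exact hvR (hKR h)
        · exact hANW v (hM'A h) hvW
      have hdisjKM' : Disjoint K M' := by
        rw [Finset.disjoint_left]
        intro x hx hx'
        exact (hANW x (hM'A hx')) (hRW (hKR hx))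
      have hMcard : M.card = m + M'.card + 1 := by
        rw [hMdec, Finset.card_insert_of_notMem hvKM',
          Finset.card_union_of_disjoint hdisjKM']
      -- generic "Opt3/Opt2" move: color v together with a response avoiding v's nbrs
      have hOpt3 : ∀ (Q : Finset V) (c' : ℕ), Q ⊆ M' → Indep G Q →
          (∀ y ∈ Q, ¬ G.Adj v y) →
          c' + scost G (A \ Q) ≤ scost G A →
          M.card ≤ c' + uu l +
            (if ∃ x ∈ S, G.Adj v x ∧ x ∉ R then eps l else 0) →
          ∃ I, I ⊆ M ∧ I ≠ ∅ ∧ Indep G I ∧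
            M.card + scost G (S \ I) ≤ scost G A + gfun G v R S := by
        intro Q c' hQM' hQind hQnadj hQresp harith
        have hQA : Q ⊆ A := hQM'.trans hM'A
        apply hfinish {v} Q c' (by simpa using hvW) hQA
        · apply Finset.union_subset _ (hQM'.trans hM'M)
          simpa using hvM
        · intro h
          have : v ∈ ({v} : Finset V) ∪ Q :=
            Finset.mem_union.mpr (Or.inl (Finset.mem_singleton_self v))
          rw [h] at this
          simp at this
        · intro x hx y hy hadj
          simp only [Finset.mem_union, Finset.mem_singleton] at hx hy
          rcases hx with rfl | hx <;> rcases hy with rfl | hy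
          · exact G.irrefl hadj
          · exact hQnadj y hy hadj
          · exact hQnadj x hx hadj.symm
          · exact hQind x hx y hy hadj
        · exact hQresp
        · have hgI : gfun G v R (S \ ({v} ∪ Q)) = l := by
            rw [gfun_of_not_mem, hvcardS Q hQA]
            intro hc
            rw [Finset.mem_sdiff] at hc
            exact hc.2 (Finset.mem_union.mpr (Or.inl (Finset.mem_singleton_self v)))
          rw [hgI, hgS]
          omega
      -- generic "Opt1" move: color K ∪ I', leaving v uncovered
      have hOpt1 : K ∪ I' ≠ ∅ →
          (1 + uu (l - m) +
            (if ∃ x ∈ S \ (K ∪ I'), G.Adj v x ∧ x ∉ R then eps (l - m) else 0) ≤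
            uu l + (if ∃ x ∈ S, G.Adj v x ∧ x ∉ R then eps l else 0)) →
          ∃ I, I ⊆ M ∧ I ≠ ∅ ∧ Indep G I ∧
            M.card + scost G (S \ I) ≤ scost G A + gfun G v R S := by
        intro hne harith
        apply hfinish K I' M'.card (hKR.trans hRW) hI'A hKI'M hne (hindep I' hI'A hI'ind)
          hI'resp
        have hvSI : v ∈ S \ (K ∪ I') := by
          rw [Finset.mem_sdiff]
          refine ⟨hvS, fun h => ?_⟩
          rcases Finset.mem_union.mp h with h | h
          · exact hvR (hKR h)
          · exact hvI' h
        have hgI : gfun G v R (S \ (K ∪ I')) = (l - m) + uu (l - m) +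
            (if ∃ x ∈ S \ (K ∪ I'), G.Adj v x ∧ x ∉ R then eps (l - m) else 0) := by
          rw [gfun_of_mem G v R _ hvSI, hKcardS I' hI'A]
        rw [hgI, hgS, hMcard]
        omega
      set Mu : Finset V := M'.filter (fun x => G.Adj v x) with hMu
      have hMuM' : Mu ⊆ M' := Finset.filter_subset _ _
      have hMunR : ∀ x ∈ Mu, G.Adj v x ∧ x ∉ R := by
        intro x hx
        rw [hMu, Finset.mem_filter] at hx
        exact ⟨hx.2, fun hc => (hANW x (hM'A hx.1)) (hRW hc)⟩
      by_cases hMuE : Mu = ∅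
      · -- no marked live non-leaf neighbor
        have hI'nadj : ∀ y ∈ I', ¬ G.Adj v y := by
          intro y hy hadj
          have : y ∈ Mu := by
            rw [hMu, Finset.mem_filter]
            exact ⟨hI'M' hy, hadj⟩
          rw [hMuE] at this
          simp at this
        by_cases hu : ∃ x ∈ S, G.Adj v x ∧ x ∉ R
        · by_cases hC : uu (l - m) + eps (l - m) + 1 ≤ uu l + eps l
          · by_cases hKIe : K ∪ I' = ∅
            · -- M' = ∅ or at least I' = ∅ and K = ∅; respond {v}
              have hKe : K = ∅ := by
                rw [Finset.union_eq_empty] at hKIe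
                exact hKIe.1
              apply hOpt3 I' M'.card hI'M' hI'ind hI'nadj hI'resp
              rw [if_pos hu, hMcard]
              have := one_le_uu l
              have hm0 : m = 0 := by rw [hm, hKe]; simp
              omega
            · apply hOpt1 hKIe
              rw [if_pos hu]
              have : (if ∃ x ∈ S \ (K ∪ I'), G.Adj v x ∧ x ∉ R
                  then eps (l - m) else 0) ≤ eps (l - m) := by
                split <;> omega
              omega
          · have hAR := AR2 hmle hC
            apply hOpt3 I' M'.card hI'M' hI'ind hI'nadj hI'resp
            rw [if_pos hu, hMcard]
            omega
        · -- no live non-leaf neighbor at all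
          have hI'nadj2 : ∀ y ∈ I', ¬ G.Adj v y := hI'nadj
          by_cases hC : uu (l - m) + 1 ≤ uu l
          · by_cases hKIe : K ∪ I' = ∅
            · have hKe : K = ∅ := by
                rw [Finset.union_eq_empty] at hKIe
                exact hKIe.1
              apply hOpt3 I' M'.card hI'M' hI'ind hI'nadj hI'resp
              rw [if_neg hu, hMcard]
              have := one_le_uu l
              have hm0 : m = 0 := by rw [hm, hKe]; simp
              omega
            · apply hOpt1 hKIe
              rw [if_neg hu, if_neg (fun h => hu (hucond_mono _ h))]
              omega
          · have hAR := AR3 hmle hC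
            apply hOpt3 I' M'.card hI'M' hI'ind hI'nadj hI'resp
            rw [if_neg hu, hMcard]
            omega
      · -- some marked live non-leaf neighbor u₀
        obtain ⟨u₀, hu₀⟩ := Finset.nonempty_iff_ne_empty.mpr hMuE
        have hu₀adj : G.Adj v u₀ := (hMunR u₀ hu₀).1
        have hu₀nR : u₀ ∉ R := (hMunR u₀ hu₀).2
        have hu₀S : u₀ ∈ S := (Finset.mem_sdiff.mp (hM'A (hMuM' hu₀))).1
        have hu : ∃ x ∈ S, G.Adj v x ∧ x ∉ R := ⟨u₀, hu₀S, hu₀adj, hu₀nR⟩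
        have huniq : ∀ x, G.Adj v x → x ∉ R → x = u₀ := by
          intro x h1 h2
          exact hone x u₀ h1 h2 hu₀adj hu₀nR
        have hM'ne : M' ≠ ∅ := fun h => by
          have := hMuM' hu₀
          rw [h] at this
          simp at this
        have hI'nem : I' ≠ ∅ := hI'ne hM'ne
        have hKIne : K ∪ I' ≠ ∅ := by
          intro h
          rw [Finset.union_eq_empty] at h
          exact hI'nem h.2
        by_cases huI : u₀ ∈ I'
        · -- coloring I' kills the non-leaf neighbor
          have hucond1 : ¬ ∃ x ∈ S \ (K ∪ I'), G.Adj v x ∧ x ∉ R := by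
            rintro ⟨x, hx, h1, h2⟩
            have := huniq x h1 h2
            subst this
            exact (Finset.mem_sdiff.mp hx).2 (Finset.mem_union.mpr (Or.inr huI))
          by_cases hC : uu (l - m) + 1 ≤ uu l + eps l
          · apply hOpt1 hKIne
            rw [if_pos hu, if_neg hucond1]
            omega
          · have hAR := AR1 hmle hC
            -- Opt2: respond {v} ∪ I₂ with I₂ a response to M' \ Mu
            obtain ⟨I₂, hI₂M'', hI₂ind, hI₂resp, _⟩ :=
              ex_resp G (show M' \ Mu ⊆ A from (Finset.sdiff_subset).trans hM'A)
            have hI₂M' : I₂ ⊆ M' := hI₂M''.trans Finset.sdiff_subset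
            have hI₂nadj : ∀ y ∈ I₂, ¬ G.Adj v y := by
              intro y hy hadj
              have hyMu : y ∈ Mu := by
                rw [hMu, Finset.mem_filter]
                exact ⟨hI₂M' hy, hadj⟩
              have := hI₂M'' hy
              rw [Finset.mem_sdiff] at this
              exact this.2 hyMu
            have hA' : A \ (M' \ Mu) = A \ (M' \ Mu) := rfl
            apply hOpt3 I₂ (M' \ Mu).card hI₂M' hI₂ind hI₂nadj (by
              have : A \ I₂ = A \ I₂ := rfl
              exact hI₂resp)
            rw [if_pos hu, hMcard]
            have hMusub : Mu ⊆ {u₀} := by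
              intro x hx
              rw [Finset.mem_singleton]
              exact huniq x (hMunR x hx).1 (hMunR x hx).2
            have hMucard : Mu.card = 1 := by
              have h1 : Mu.card ≤ 1 := by
                calc Mu.card ≤ ({u₀} : Finset V).card := Finset.card_le_card hMusub
                  _ = 1 := Finset.card_singleton u₀
              have h2 : 1 ≤ Mu.card := Finset.card_pos.mpr ⟨u₀, hu₀⟩
              omega
            have hM''card : (M' \ Mu).card = M'.card - 1 := by
              rw [Finset.card_sdiff_of_subset hMuM', hMucard]
            have hMu1 : 1 ≤ M'.card := by
              have := Finset.card_le_card hMuM'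
              omega
            omega
        · -- the non-leaf neighbor is marked but not colored by I'
          have hI'nadj : ∀ y ∈ I', ¬ G.Adj v y := by
            intro y hy hadj
            have hynR : y ∉ R := fun hc => (hANW y (hI'A hy)) (hRW hc)
            have := huniq y hadj hynR
            subst this
            exact huI hy
          by_cases hC : uu (l - m) + eps (l - m) + 1 ≤ uu l + eps l
          · apply hOpt1 hKIne
            rw [if_pos hu]
            have : (if ∃ x ∈ S \ (K ∪ I'), G.Adj v x ∧ x ∉ R
                then eps (l - m) else 0) ≤ eps (l - m) := by
              split <;> omega
            omega
          · have hAR := AR2 hmle hC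
            apply hOpt3 I' M'.card hI'M' hI'ind hI'nadj hI'resp
            rw [if_pos hu, hMcard]
            omega
    -- ==================== CASE: v not marked ====================
    · have hMdec : M = K ∪ M' := by
        ext x
        simp only [Finset.mem_union, hK, hM', hW, Finset.mem_insert,
          Finset.mem_inter, Finset.mem_sdiff]
        constructor
        · intro hx
          by_cases hxR : x ∈ R
          · exact Or.inl ⟨hx, hxR⟩
          · refine Or.inr ⟨hx, fun hc => ?_⟩
            rcases hc with h | h
            · subst h; exact hvM hx
            · exact hxR h
        · rintro (⟨hx, _⟩ | ⟨hx, _⟩) <;> exact hx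
      have hdisjKM' : Disjoint K M' := by
        rw [Finset.disjoint_left]
        intro x hx hx'
        exact (hANW x (hM'A hx')) (hRW (hKR hx))
      have hMcard : M.card = m + M'.card := by
        rw [hMdec, Finset.card_union_of_disjoint hdisjKM']
      have hKIne : K ∪ I' ≠ ∅ := by
        intro h
        rw [Finset.union_eq_empty] at h
        apply hMne
        rw [hMdec, h.1]
        by_cases hM'e : M' = ∅
        · rw [hM'e]; simp
        · exact absurd h.2 (hI'ne hM'e)
      apply hfinish K I' M'.card (hKR.trans hRW) hI'A hKI'M hKIne
        (hindep I' hI'A hI'ind) hI'resp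
      rw [hMcard]
      -- arithmetic: m + gfun (S \ (K ∪ I')) ≤ gfun S
      by_cases hvS : v ∈ S
      · have hvSI : v ∈ S \ (K ∪ I') := by
          rw [Finset.mem_sdiff]
          refine ⟨hvS, fun h => ?_⟩
          rcases Finset.mem_union.mp h with h | h
          · exact hvR (hKR h)
          · exact hvI' h
        have hgS : gfun G v R S = l + uu l +
            (if ∃ x ∈ S, G.Adj v x ∧ x ∉ R then eps l else 0) := gfun_of_mem G v R S hvS
        have hgI : gfun G v R (S \ (K ∪ I')) = (l - m) + uu (l - m) +
            (if ∃ x ∈ S \ (K ∪ I'), G.Adj v x ∧ x ∉ R then eps (l - m) else 0) := by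
          rw [gfun_of_mem G v R _ hvSI, hKcardS I' hI'A]
        rw [hgI, hgS]
        by_cases hc1 : ∃ x ∈ S \ (K ∪ I'), G.Adj v x ∧ x ∉ R
        · rw [if_pos hc1, if_pos (hucond_mono _ hc1)]
          have := uu_eps_mono (show l - m ≤ l by omega)
          omega
        · rw [if_neg hc1]
          have h1 := uu_mono (show l - m ≤ l by omega)
          omega
      · have hvSI : v ∉ S \ (K ∪ I') := fun h => hvS (Finset.mem_sdiff.mp h).1
        have hgS : gfun G v R S = l := gfun_of_not_mem G v R S hvS
        have hgI : gfun G v R (S \ (K ∪ I')) = l - m := by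
          rw [gfun_of_not_mem G v R _ hvSI, hKcardS I' hI'A]
        rw [hgI, hgS]
        omega

/-! ### Assembly -/

lemma star_value (r : ℕ) : scost (starGraph r) Finset.univ = r + uu r := by
  classical
  have hadj : ∀ x y : Fin (r+1), (starGraph r).Adj x y ↔ x ≠ y ∧ (x = 0 ∨ y = 0) := by
    intro x y
    simp only [starGraph, SimpleGraph.fromRel_adj]
  set Rs : Finset (Fin (r+1)) := Finset.univ.erase 0 with hRs
  have hRscard : Rs.card = r := by
    rw [hRs, Finset.card_erase_of_mem (Finset.mem_univ 0), Finset.card_univ,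
      Fintype.card_fin]
    omega
  have hucard : (Finset.univ : Finset (Fin (r+1))).card = r + 1 := by
    rw [Finset.card_univ, Fintype.card_fin]
  apply le_antisymm
  · -- upper bound via the main invariant
    have hleaf' : ∀ w ∈ Rs, ∀ x, (starGraph r).Adj w x ↔ x = 0 := by
      intro w hw x
      have hw0 : w ≠ 0 := (Finset.mem_erase.mp hw).1
      rw [hadj]
      constructor
      · rintro ⟨hne, h | h⟩
        · exact absurd h hw0
        · exact h
      · rintro rfl
        exact ⟨hw0, Or.inr rfl⟩
    have hone' : ∀ x y : Fin (r+1), (starGraph r).Adj 0 x → x ∉ Rs →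
        (starGraph r).Adj 0 y → y ∉ Rs → x = y := by
      intro x y h1 h2 _ _
      exfalso
      have hx0 : x = 0 := by
        by_contra hc
        exact h2 (Finset.mem_erase.mpr ⟨hc, Finset.mem_univ x⟩)
      rw [hx0] at h1
      exact (starGraph r).irrefl h1
    have h := main_upper (starGraph r) 0 Rs hleaf' hone'
      (Finset.univ.card) Finset.univ (le_refl _)
    have hWuniv : insert 0 Rs = Finset.univ := by
      rw [hRs, Finset.insert_erase (Finset.mem_univ 0)]
    rw [hWuniv, Finset.sdiff_self, scost_empty] at h
    have hg : gfun (starGraph r) 0 Rs Finset.univ = r + uu r := by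
      rw [gfun_of_mem _ _ _ _ (Finset.mem_univ 0)]
      have hinter : (Finset.univ ∩ Rs).card = r := by
        rw [Finset.univ_inter, hRscard]
      have hcond : ¬ ∃ x ∈ (Finset.univ : Finset (Fin (r+1))),
          (starGraph r).Adj 0 x ∧ x ∉ Rs := by
        rintro ⟨x, _, h1, h2⟩
        have hx0 : x = 0 := by
          by_contra hc
          exact h2 (Finset.mem_erase.mpr ⟨hc, Finset.mem_univ x⟩)
        rw [hx0] at h1
        exact (starGraph r).irrefl h1
      rw [hinter, if_neg hcond]
      omega
    rw [hg] at h
    simpa using h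
  · -- lower bound via star_lower
    have h := star_lower (starGraph r) (Finset.univ.card) Finset.univ 0 (le_refl _)
      (Finset.mem_univ 0)
      (by
        intro x _ hx
        rw [hadj]
        exact ⟨fun hc => hx hc.symm, Or.inl rfl⟩)
      (by
        intro x _ hx y _ hy hadj'
        rw [hadj] at hadj'
        rcases hadj'.2 with h | h
        · exact hx h
        · exact hy h)
    rw [hucard] at h
    simpa using h

theorem stmt7' (G : SimpleGraph V) (v : V) (R : Finset V)
    (hv : IsStem G v) (hR : ∀ w, w ∈ R ↔ (G.Adj v w ∧ IsLeaf G w))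
    (htri : ¬ IsTriangular (R.card + 1)) :
    scost G Finset.univ =
      scost G (Finset.univ \ insert v R) + scost (starGraph R.card) Finset.univ := by
  classical
  -- leaves have exactly the neighbor v
  have hleaf : ∀ w ∈ R, ∀ x, G.Adj w x ↔ x = v := by
    intro w hw x
    obtain ⟨hadjv, hlf⟩ := (hR w).mp hw
    obtain ⟨a, ha⟩ := Set.ncard_eq_one.mp hlf
    have hva : v ∈ G.neighborSet w := by
      rw [SimpleGraph.mem_neighborSet]
      exact hadjv.symm
    rw [ha] at hva
    rw [Set.mem_singleton_iff] at hva
    subst hva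
    constructor
    · intro h
      have : x ∈ G.neighborSet w := h
      rw [ha] at this
      exact Set.mem_singleton_iff.mp this
    · intro hxv
      have hv' : v ∈ G.neighborSet w := by
        rw [ha]
        exact Set.mem_singleton_iff.mpr rfl
      rw [hxv]
      exact hv'
  have hvR : v ∉ R := by
    intro h
    exact G.irrefl ((hleaf v h v).mpr rfl)
  have hone : ∀ x y, G.Adj v x → x ∉ R → G.Adj v y → y ∉ R → x = y := by
    intro x y h1 h2 h3 h4
    have hx : x ∈ {w | G.Adj v w ∧ ¬ IsLeaf G w} := by
      refine ⟨h1, fun hc => h2 ((hR x).mpr ⟨h1, hc⟩)⟩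
    have hy : y ∈ {w | G.Adj v w ∧ ¬ IsLeaf G w} := by
      refine ⟨h3, fun hc => h4 ((hR y).mpr ⟨h3, hc⟩)⟩
    by_contra hxy
    have hfin : {w | G.Adj v w ∧ ¬ IsLeaf G w}.Finite := Set.toFinite _
    have h2' : 1 < {w | G.Adj v w ∧ ¬ IsLeaf G w}.ncard := by
      rw [Set.one_lt_ncard_iff hfin]
      exact ⟨x, y, hx, hy, hxy⟩
    have hle := hv.2
    omega
  -- upper bound
  have hupper : scost G Finset.univ ≤ scost G (Finset.univ \ insert v R) + (R.card + uu R.card) := by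
    have h := main_upper G v R hleaf hone (Finset.univ.card) Finset.univ (le_refl _)
    have hg : gfun G v R Finset.univ ≤ R.card + uu R.card := by
      rw [gfun_of_mem _ _ _ _ (Finset.mem_univ v), Finset.univ_inter]
      rw [eps_zero_of_not R.card htri]
      split <;> omega
    omega
  -- the star part is worth at least r + uu r
  have hWv : v ∈ insert v R := Finset.mem_insert_self v R
  have hWcard : (insert v R).card = R.card + 1 := by
    rw [Finset.card_insert_of_notMem hvR]
  have hstar : R.card + uu R.card ≤ scost G (insert v R) := by
    have h := star_lower G ((insert v R).card) (insert v R) v (le_refl _) hWv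
      (by
        intro x hx hxv
        have hxR : x ∈ R := by
          rcases Finset.mem_insert.mp hx with h | h
          · exact absurd h hxv
          · exact h
        exact ((hleaf x hxR v).mpr rfl).symm)
      (by
        intro x hx hxv y hy hyv hadj
        have hxR : x ∈ R := by
          rcases Finset.mem_insert.mp hx with h | h
          · exact absurd h hxv
          · exact h
        exact hyv ((hleaf x hxR y).mp hadj))
    rw [hWcard] at h
    simpa using h
  -- superadditivity
  have hsuper : scost G (Finset.univ \ insert v R) + scost G (insert v R) ≤
      scost G Finset.univ := by
    have h := scost_superadd G ((Finset.univ \ insert v R).card)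
      (Finset.univ \ insert v R) (insert v R)
      (le_refl _) (Finset.sdiff_disjoint)
    rw [Finset.sdiff_union_of_subset (Finset.subset_univ (insert v R))] at h
    exact h
  rw [star_value]
  omega

/-- If `v` is a stem in a forest `T` with `r ≥ 1` leaf neighbors (forming the set `R`),
and `r + 1` is not triangular, then `s̊(T) = s̊(T - R - v) + s̊(K_{1,r})`. -/
theorem stmt7 (G : SimpleGraph V) (hG : G.IsAcyclic) (v : V) (R : Finset V)
    (hv : IsStem G v) (hR : ∀ w, w ∈ R ↔ (G.Adj v w ∧ IsLeaf G w)) (hr : 1 ≤ R.card)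
    (htri : ¬ IsTriangular (R.card + 1)) :
    scost G Finset.univ =
      scost G (Finset.univ \ insert v R) + scost (starGraph R.card) Finset.univ :=
  stmt7' G v R hv hR htri
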